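/- With the notation above, the set V_b = T_b ∪ T̄_b is an F_2-linear subspace of F_2^n, of dimension dim(T_b) if T̄_b is empty and dim(T_b) + 1 otherwise. -/
import Mathlib


open Finset

/-- `Vec n` is the vector space `F_2^n`. -/
abbrev Vec (n : ℕ) := Fin n → ZMod 2

/-- The standard dot product on `F_2^n`. -/
def dotp {n : ℕ} (a b : Vec n) : ZMod 2 := ∑ i, a i * b i

/-- The difference (derivative) function `D_{F,a}(x) = F(x) + F(x+a)`. -/
def Dder {n : ℕ} (F : Vec n → Vec n) (a x : Vec n) : Vec n := F x + F (x + a)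

/-- The linear hyperplane `H_b = {x : ⟨b,x⟩ = 0}`. -/
def Hyp {n : ℕ} (b : Vec n) : Set (Vec n) := {x | dotp b x = 0}

/-- The affine hyperplane `H̄_b = {x : ⟨b,x⟩ = 1}`. -/
def HypBar {n : ℕ} (b : Vec n) : Set (Vec n) := {x | dotp b x = 1}

/-- `T_b = {a : image(D_{F,a}) = H_b} ∪ {0}`. -/
def Tset {n : ℕ} (F : Vec n → Vec n) (b : Vec n) : Set (Vec n) :=
  {a | Set.range (Dder F a) = Hyp b} ∪ {0}

/-- `T̄_b = {a : image(D_{F,a}) = H̄_b}`. -/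
def TsetBar {n : ℕ} (F : Vec n → Vec n) (b : Vec n) : Set (Vec n) :=
  {a | Set.range (Dder F a) = HypBar b}

/-- `V_b = T_b ∪ T̄_b`. -/
def Vset {n : ℕ} (F : Vec n → Vec n) (b : Vec n) : Set (Vec n) := Tset F b ∪ TsetBar F b

/-- `F` is quadratic: all second derivatives are constant (algebraic degree ≤ 2). -/
def IsQuadratic {n m : ℕ} (F : Vec n → Vec m) : Prop :=
  ∀ a₁ a₂ : Vec n, ∃ c : Vec m, ∀ x, F (x + a₁ + a₂) + F (x + a₁) + F (x + a₂) + F x = c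

/-- `F` is APN: every equation `F(x) + F(x+a) = b`, `a ≠ 0`, has at most 2 solutions. -/
def IsAPN {n : ℕ} (F : Vec n → Vec n) : Prop :=
  ∀ a : Vec n, a ≠ 0 → ∀ b : Vec n, Nat.card {x : Vec n // F x + F (x + a) = b} ≤ 2

/-- The Walsh transform `W_F(b,a) = Σ_x (-1)^{⟨b,F(x)⟩ + ⟨a,x⟩}`. -/
def Walsh {n m : ℕ} (F : Vec n → Vec m) (b : Vec m) (a : Vec n) : ℤ :=
  ∑ x : Vec n, (-1 : ℤ) ^ ((dotp b (F x) + dotp a x).val)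

/-- The component `F_b` is bent: `|W_F(b,a)| = 2^{n/2}` for all `a`. -/
def IsBent {n m : ℕ} (F : Vec n → Vec m) (b : Vec m) : Prop :=
  ∀ a : Vec n, (Walsh F b a) ^ 2 = 2 ^ n

/-- The set `N_F` of non-trivial non-bent components of `F`. -/
def NF {n m : ℕ} (F : Vec n → Vec m) : Set (Vec m) := {b | b ≠ 0 ∧ ¬ IsBent F b}

/-- A vector space partition of `F_q^n`: a collection of nonzero subspaces such that
every nonzero vector lies in exactly one member. -/
def IsVSP {K : Type} [Field K] {n : ℕ} (𝒱 : Finset (Submodule K (Fin n → K))) : Prop :=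
  (∀ S ∈ 𝒱, S ≠ ⊥) ∧
  ∀ x : Fin n → K, x ≠ 0 → ∃! S : Submodule K (Fin n → K), S ∈ 𝒱 ∧ x ∈ S

/-- A blocking set of `PG(m,2)` (identified with `F_2^{m+1} \ {0}`) with respect to
`k`-spaces (nonzero parts of `(k+1)`-dimensional subspaces). -/
def PGBlocking (m k : ℕ) (B : Set (Fin (m + 1) → ZMod 2)) : Prop :=
  0 ∉ B ∧ ∀ S : Submodule (ZMod 2) (Fin (m + 1) → ZMod 2),
    Module.finrank (ZMod 2) S = k + 1 → ∃ x ∈ B, x ∈ S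

/-- `F_b` has amplitude `2^{(n+k)/2}`. -/
def HasAmp {n m : ℕ} (F : Vec n → Vec m) (b : Vec m) (k : ℕ) : Prop :=
  (∀ a, (Walsh F b a) ^ 2 = 0 ∨ (Walsh F b a) ^ 2 = 2 ^ (n + k)) ∧
  ∃ a, (Walsh F b a) ^ 2 = 2 ^ (n + k)


namespace Stmt2Aux

variable {n : ℕ} (F : Vec n → Vec n) (b : Vec n)

lemma h2 (v : ZMod 2) : v + v = 0 := by revert v; decide
lemma zmod2cases (v : ZMod 2) : v = 0 ∨ v = 1 := by revert v; decide

lemma vadd_self (v : Vec n) : v + v = 0 := funext fun _ => h2 _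

lemma card_vec : Fintype.card (Vec n) = 2 ^ n := by
  simp [Fintype.card_fun, ZMod.card]

lemma dotp_add (u v : Vec n) : dotp b (u + v) = dotp b u + dotp b v := by
  simp [dotp, mul_add, Finset.sum_add_distrib]

/-- `psi x = ⟨b, F x⟩`, the component function. -/
def psi (x : Vec n) : ZMod 2 := dotp b (F x)

/-- The associated bilinear form composed with `b`. -/
def beta (a x : Vec n) : ZMod 2 := psi F b (a + x) + psi F b a + psi F b x + psi F b 0

/-- `gg a = ⟨b, F a + F 0⟩`. -/
def gg (a : Vec n) : ZMod 2 := psi F b a + psi F b 0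

lemma key (hq : IsQuadratic F) (y a x : Vec n) :
    psi F b (y + a + x) + psi F b (y + a) + psi F b (y + x) + psi F b y
      = psi F b (a + x) + psi F b a + psi F b x + psi F b 0 := by
  obtain ⟨c, hc⟩ := hq a x
  have h1 := congrArg (dotp b) (hc y)
  have h0 := congrArg (dotp b) (hc 0)
  simp only [zero_add] at h0
  rw [dotp_add, dotp_add, dotp_add] at h1 h0
  exact (show _ = dotp b c from h1).trans h0.symm

lemma beta_zero (x : Vec n) : beta F b 0 x = 0 := by
  simp only [beta, zero_add]
  linear_combination h2 (psi F b x) + h2 (psi F b 0)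

lemma beta_add (hq : IsQuadratic F) (a a' x : Vec n) :
    beta F b (a + a') x = beta F b a x + beta F b a' x := by
  have hk := key F b hq a' a x
  rw [show a' + a = a + a' from add_comm _ _] at hk
  simp only [beta]
  linear_combination hk - h2 (psi F b (a' + x)) - h2 (psi F b a')

lemma gg_zero : gg F b 0 = 0 := h2 _

lemma gg_add (a a' : Vec n) (hV : beta F b a a' = 0) :
    gg F b (a + a') = gg F b a + gg F b a' := by
  simp only [gg, beta] at *
  linear_combination hV - h2 (psi F b 0) - h2 (psi F b a) - h2 (psi F b a')

lemma card_fiber (hb : b ≠ 0) (v : ZMod 2) :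
    (univ.filter fun y : Vec n => dotp b y = v).card = 2 ^ (n - 1) := by
  obtain ⟨i, hi⟩ : ∃ i, b i ≠ 0 := by
    by_contra h; push_neg at h; exact hb (funext fun i => h i)
  have hbi : b i = 1 := (zmod2cases (b i)).resolve_left hi
  have hn : 0 < n := i.pos
  set e : Vec n := Pi.single i 1 with he
  have hde : dotp b e = 1 := by
    simp [dotp, he, Pi.single_apply, mul_ite, Finset.sum_ite_eq', hbi]
  have hcard : ∀ w : ZMod 2,
      (univ.filter fun y : Vec n => dotp b y = w).card
        = (univ.filter fun y : Vec n => dotp b y = w + 1).card := by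
    intro w
    apply Finset.card_bij' (fun y _ => y + e) (fun y _ => y + e)
    · intro y hy
      simp only [mem_filter, mem_univ, true_and] at hy ⊢
      rw [dotp_add, hy, hde]
    · intro y hy
      simp only [mem_filter, mem_univ, true_and] at hy ⊢
      rw [dotp_add, hy, hde, add_assoc, h2, add_zero]
    · intro y _; rw [add_assoc, vadd_self, add_zero]
    · intro y _; rw [add_assoc, vadd_self, add_zero]
  have hsplit : (univ.filter fun y : Vec n => dotp b y = 0).card
      + (univ.filter fun y : Vec n => dotp b y = 1).card = 2 ^ n := by
    have heq : (univ.filter fun y : Vec n => dotp b y = 1)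
        = (univ.filter fun y : Vec n => ¬ dotp b y = 0) := by
      apply Finset.filter_congr
      intro y _
      constructor
      · intro h h0; rw [h0] at h; exact absurd h (by decide)
      · intro h; exact (zmod2cases _).resolve_left h
    rw [heq, Finset.card_filter_add_card_filter_not, card_univ, card_vec]
  have h01 := hcard 0
  rw [zero_add] at h01
  have hc0 : (univ.filter fun y : Vec n => dotp b y = 0).card = 2 ^ (n - 1) := by
    rw [h01] at hsplit
    have h2n : 2 ^ n = 2 * 2 ^ (n - 1) := by
      rw [← pow_succ']
      congr 1
      omega
    omega
  rcases zmod2cases v with rfl | rfl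
  · exact hc0
  · rw [← h01]; exact hc0

lemma card_image (ha : IsAPN F) (a : Vec n) (hne : a ≠ 0) :
    2 ^ (n - 1) ≤ (univ.image (Dder F a)).card := by
  have hfib : ∀ y : Vec n, (univ.filter fun x => Dder F a x = y).card ≤ 2 := by
    intro y
    have := ha a hne y
    rwa [Nat.card_eq_fintype_card, Fintype.card_subtype] at this
  have hsum : ∑ y ∈ univ.image (Dder F a), (univ.filter fun x => Dder F a x = y).card
      = 2 ^ n := by
    rw [← Finset.card_eq_sum_card_image, card_univ, card_vec]
  have hle : (2:ℕ) ^ n ≤ (univ.image (Dder F a)).card * 2 := by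
    rw [← hsum]
    calc ∑ y ∈ univ.image (Dder F a), (univ.filter fun x => Dder F a x = y).card
        ≤ ∑ _y ∈ univ.image (Dder F a), 2 := Finset.sum_le_sum fun y _ => hfib y
      _ = (univ.image (Dder F a)).card * 2 := by rw [Finset.sum_const, smul_eq_mul]
  have hn : 0 < n := by
    rcases Nat.eq_zero_or_pos n with rfl | h
    · exact absurd (Subsingleton.elim a 0) hne
    · exact h
  have h2n : 2 ^ n = 2 ^ (n - 1) * 2 := by
    rw [← pow_succ]; congr 1; omega
  omega

lemma range_eq (hq : IsQuadratic F) (ha : IsAPN F) (hb : b ≠ 0)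
    (a : Vec n) (hne : a ≠ 0) (hbeta : ∀ x, beta F b a x = 0) :
    Set.range (Dder F a) = {y | dotp b y = gg F b a} := by
  have hDdot : ∀ x, dotp b (Dder F a x) = gg F b a := by
    intro x
    rw [show Dder F a x = F x + F (x + a) from rfl, dotp_add, add_comm x a]
    have hx := hbeta x
    simp only [beta, gg, psi] at *
    linear_combination hx - h2 (dotp b (F a)) - h2 (dotp b (F 0))
  have hFs : univ.image (Dder F a) = univ.filter (fun y => dotp b y = gg F b a) := by
    apply Finset.eq_of_subset_of_card_le
    · intro y hy
      simp only [mem_image, mem_univ, true_and] at hy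
      obtain ⟨x, rfl⟩ := hy
      simp only [mem_filter, mem_univ, true_and]
      exact hDdot x
    · rw [card_fiber b hb]
      exact card_image F ha a hne
  have := congrArg (fun s : Finset (Vec n) => (s : Set (Vec n))) hFs
  simpa [Set.ext_iff] using this

lemma mem_of_range_eq (a : Vec n) (v : ZMod 2)
    (hr : Set.range (Dder F a) = {y | dotp b y = v}) :
    (∀ x, beta F b a x = 0) ∧ gg F b a = v := by
  have hDdot : ∀ x, dotp b (Dder F a x) = v := by
    intro x
    have hx : Dder F a x ∈ Set.range (Dder F a) := ⟨x, rfl⟩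
    rw [hr] at hx
    exact hx
  have h0 := hDdot 0
  rw [show Dder F a 0 = F 0 + F (0 + a) from rfl, dotp_add, zero_add] at h0
  have hg : gg F b a = v := by
    simp only [gg, psi]
    linear_combination h0
  refine ⟨fun x => ?_, hg⟩
  have hx := hDdot x
  rw [show Dder F a x = F x + F (x + a) from rfl, dotp_add, add_comm x a] at hx
  simp only [beta, psi]
  linear_combination hx + h0 + h2 v

lemma range_zero : Set.range (Dder F 0) = {0} := by
  have : ∀ x, Dder F 0 x = 0 := by
    intro x
    rw [show Dder F 0 x = F x + F (x + 0) from rfl, add_zero, vadd_self]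
  ext y
  simp [this]
  tauto

lemma dotp_zero : dotp b (0 : Vec n) = 0 := by simp [dotp]

lemma Tset_eq (hq : IsQuadratic F) (ha : IsAPN F) (hb : b ≠ 0) :
    Tset F b = {a | (∀ x, beta F b a x = 0) ∧ gg F b a = 0} := by
  ext a
  constructor
  · rintro (hr | rfl)
    · exact mem_of_range_eq F b a 0 hr
    · exact ⟨beta_zero F b, gg_zero F b⟩
  · rintro ⟨hbeta, hg⟩
    by_cases hne : a = 0
    · exact Or.inr hne
    · left
      show Set.range (Dder F a) = Hyp b
      rw [range_eq F b hq ha hb a hne hbeta, hg]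
      rfl

lemma TsetBar_eq (hq : IsQuadratic F) (ha : IsAPN F) (hb : b ≠ 0) :
    TsetBar F b = {a | (∀ x, beta F b a x = 0) ∧ gg F b a = 1} := by
  ext a
  constructor
  · intro hr
    exact mem_of_range_eq F b a 1 hr
  · rintro ⟨hbeta, hg⟩
    have hne : a ≠ 0 := by
      rintro rfl
      rw [gg_zero] at hg
      exact absurd hg (by decide)
    show Set.range (Dder F a) = HypBar b
    rw [range_eq F b hq ha hb a hne hbeta, hg]
    rfl

lemma TsetBar_ne_zero (hb : b ≠ 0) (a : Vec n) (h : a ∈ TsetBar F b) : a ≠ 0 := by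
  rintro rfl
  have hr : Set.range (Dder F (0 : Vec n)) = HypBar b := h
  rw [range_zero] at hr
  have : (0 : Vec n) ∈ HypBar b := by rw [← hr]; rfl
  have h0 : dotp b (0 : Vec n) = 1 := this
  rw [dotp_zero] at h0
  exact absurd h0 (by decide)

lemma Vset_eq (hq : IsQuadratic F) (ha : IsAPN F) (hb : b ≠ 0) :
    Vset F b = {a | ∀ x, beta F b a x = 0} := by
  rw [Vset, Tset_eq F b hq ha hb, TsetBar_eq F b hq ha hb]
  ext a
  constructor
  · rintro (⟨h, _⟩ | ⟨h, _⟩) <;> exact h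
  · intro h
    rcases zmod2cases (gg F b a) with hg | hg
    · exact Or.inl ⟨h, hg⟩
    · exact Or.inr ⟨h, hg⟩

/-- `V_b` as a submodule. -/
def Vsub (hq : IsQuadratic F) : Submodule (ZMod 2) (Vec n) where
  carrier := {a | ∀ x, beta F b a x = 0}
  add_mem' := fun {a} {a'} h h' x => by
    rw [beta_add F b hq, h x, h' x, add_zero]
  zero_mem' := fun x => beta_zero F b x
  smul_mem' := fun c a h => by
    rcases zmod2cases c with rfl | rfl
    · rw [zero_smul]; exact fun x => beta_zero F b x
    · rw [one_smul]; exact h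

/-- `T_b` as a submodule. -/
def Tsub (hq : IsQuadratic F) : Submodule (ZMod 2) (Vec n) where
  carrier := {a | (∀ x, beta F b a x = 0) ∧ gg F b a = 0}
  add_mem' := fun {a} {a'} h h' => by
    refine ⟨fun x => by rw [beta_add F b hq, h.1 x, h'.1 x, add_zero], ?_⟩
    rw [gg_add F b a a' (h.1 a'), h.2, h'.2, add_zero]
  zero_mem' := ⟨fun x => beta_zero F b x, gg_zero F b⟩
  smul_mem' := fun c a h => by
    rcases zmod2cases c with rfl | rfl
    · rw [zero_smul]; exact ⟨fun x => beta_zero F b x, gg_zero F b⟩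
    · rw [one_smul]; exact h

end Stmt2Aux

open Stmt2Aux in
set_option maxHeartbeats 1000000 in
set_option synthInstance.maxHeartbeats 1000000 in
theorem stmt_2_aux {n : ℕ} (F : Vec n → Vec n) (hq : IsQuadratic F) (ha : IsAPN F)
    (b : Vec n) (hb : b ≠ 0) :
    ∃ S S' : Submodule (ZMod 2) (Vec n),
      (S : Set (Vec n)) = Tset F b ∧ (S' : Set (Vec n)) = Vset F b ∧
      (TsetBar F b = ∅ →
        Module.finrank (ZMod 2) S' = Module.finrank (ZMod 2) S) ∧
      (TsetBar F b ≠ ∅ →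
        Module.finrank (ZMod 2) S' = Module.finrank (ZMod 2) S + 1) := by
  refine ⟨Tsub F b hq, Vsub F b hq, ?_, ?_, ?_, ?_⟩
  · rw [Tset_eq F b hq ha hb]; rfl
  · rw [Vset_eq F b hq ha hb]; rfl
  · -- empty case
    intro hemp
    have hST : Tsub F b hq = Vsub F b hq := by
      ext a
      constructor
      · exact fun h => h.1
      · intro h
        refine ⟨h, ?_⟩
        rcases zmod2cases (gg F b a) with hg | hg
        · exact hg
        · exfalso
          have : a ∈ TsetBar F b := by
            rw [TsetBar_eq F b hq ha hb]; exact ⟨h, hg⟩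
          rw [hemp] at this
          exact this
    rw [hST]
  · -- nonempty case
    intro hne
    obtain ⟨a₀, ha₀⟩ := Set.nonempty_iff_ne_empty.2 hne
    rw [TsetBar_eq F b hq ha hb] at ha₀
    obtain ⟨hb₀, hg₀⟩ := ha₀
    have hle : Tsub F b hq ≤ Vsub F b hq := fun a h => h.1
    let lam : Vsub F b hq →ₗ[ZMod 2] ZMod 2 :=
      { toFun := fun a => gg F b a.1
        map_add' := fun a a' => gg_add F b a.1 a'.1 (a.2 a'.1)
        map_smul' := fun c a => by
          rcases zmod2cases c with rfl | rfl
          · simp [gg_zero F b]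
          · simp }
    have hrange : LinearMap.range lam = ⊤ := by
      rw [eq_top_iff]
      rintro v -
      have h1 : (1 : ZMod 2) ∈ LinearMap.range lam := ⟨⟨a₀, hb₀⟩, hg₀⟩
      have := Submodule.smul_mem _ v h1
      rwa [smul_eq_mul, mul_one] at this
    have hker : LinearMap.ker lam
        = Submodule.comap (Vsub F b hq).subtype (Tsub F b hq) := by
      ext x
      constructor
      · intro h
        exact ⟨x.2, h⟩
      · intro h
        exact h.2
    have hfr := LinearMap.finrank_range_add_finrank_ker lam
    rw [hrange, hker] at hfr
    rw [finrank_top, Module.finrank_self] at hfr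
    have heq : Module.finrank (ZMod 2)
        (Submodule.comap (Vsub F b hq).subtype (Tsub F b hq))
        = Module.finrank (ZMod 2) (Tsub F b hq) :=
      (Submodule.comapSubtypeEquivOfLe hle).finrank_eq
    rw [heq] at hfr
    omega


theorem stmt_2 {n : ℕ} (F : Vec n → Vec n) (hq : IsQuadratic F) (ha : IsAPN F)
    (b : Vec n) (hb : b ≠ 0) :
    ∃ S S' : Submodule (ZMod 2) (Vec n),
      (S : Set (Vec n)) = Tset F b ∧ (S' : Set (Vec n)) = Vset F b ∧
      (TsetBar F b = ∅ →
        Module.finrank (ZMod 2) S' = Module.finrank (ZMod 2) S) ∧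
      (TsetBar F b ≠ ∅ →
        Module.finrank (ZMod 2) S' = Module.finrank (ZMod 2) S + 1) :=
  stmt_2_aux F hq ha b hb
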